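/- For every real α with 0 < α ≤ 1/2, the function h_α(u) = (1 − u^α)^(1/α) / f_JS(u) is nonincreasing (antitone) on the interval [0,1): for all u, v with 0 ≤ u ≤ v < 1, h_α(v) ≤ h_α(u). -/

import Mathlib

noncomputable def fJS (u : ℝ) : ℝ :=
  (1 / 2) * ((1 + u) + u * Real.logb 2 u - (1 + u) * Real.logb 2 (1 + u))

open Real Set

noncomputable def ph0 (s : ℝ) : ℝ := (1+s)*(Real.log 2 - Real.log (1+s^2)) + 2*(s*Real.log s)
noncomputable def ph1 (s : ℝ) : ℝ := (Real.log 2 - Real.log (1+s^2)) - (2*s+2*s^2)/(1+s^2) + 2*Real.log s + 2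
noncomputable def ph2 (s : ℝ) : ℝ := -(2*s)/(1+s^2) - (2+4*s-2*s^2)/(1+s^2)^2 + 2/s
noncomputable def ph3 (s : ℝ) : ℝ := (2*s^2-2)/(1+s^2)^2 - (4-12*s-12*s^2+4*s^3)/(1+s^2)^3 - 2/s^2
noncomputable def ph4 (s : ℝ) : ℝ := (12+60*s-72*s^2-40*s^3+12*s^4-4*s^5)/(1+s^2)^4 + 4/s^3

lemma hpow2 {s : ℝ} : HasDerivAt (fun x : ℝ => x^2) (2*s) s := by
  simpa using hasDerivAt_pow 2 s

lemma hpow3 {s : ℝ} : HasDerivAt (fun x : ℝ => x^3) (3*s^2) s := by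
  simpa using hasDerivAt_pow 3 s

lemma hsq {s : ℝ} : HasDerivAt (fun x : ℝ => 1+x^2) (2*s) s := by
  simpa using (hasDerivAt_pow 2 s).const_add 1

lemma hlog1s {s : ℝ} : HasDerivAt (fun x : ℝ => Real.log (1+x^2)) (2*s/(1+s^2)) s := by
  have h2 : (0:ℝ) < 1+s^2 := by positivity
  exact hsq.log h2.ne'

lemma onesq_ne {s : ℝ} : (1+s^2) ≠ 0 := by positivity

lemma hd0 {s : ℝ} (hs : 0 < s) : HasDerivAt ph0 (ph1 s) s := by
  have hA : HasDerivAt (fun x : ℝ => (1+x)*(Real.log 2 - Real.log (1+x^2)))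
      (1*(Real.log 2 - Real.log (1+s^2)) + (1+s)*(-(2*s/(1+s^2)))) s := by
    exact (((hasDerivAt_id s).const_add 1)).mul ((hlog1s).const_sub (Real.log 2))
  have hB : HasDerivAt (fun x : ℝ => 2*(x*Real.log x)) (2*(Real.log s + 1)) s :=
    (Real.hasDerivAt_mul_log hs.ne').const_mul 2
  have := hA.add hB
  refine this.congr_deriv ?_
  have h2 : (1+s^2) ≠ (0:ℝ) := onesq_ne
  have hs' : s ≠ 0 := hs.ne'
  unfold ph1
  field_simp
  all_goals first | (try ring_nf) <;> tauto | ring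

lemma hd1 {s : ℝ} (hs : 0 < s) : HasDerivAt ph1 (ph2 s) s := by
  have hA : HasDerivAt (fun x : ℝ => Real.log 2 - Real.log (1+x^2)) (-(2*s/(1+s^2))) s :=
    hlog1s.const_sub (Real.log 2)
  have hnum : HasDerivAt (fun x : ℝ => 2*x+2*x^2) (2+2*(2*s)) s := by
    exact (((hasDerivAt_id s).const_mul 2).add (hpow2.const_mul 2)).congr_deriv (by simp)
  have hB : HasDerivAt (fun x : ℝ => (2*x+2*x^2)/(1+x^2))
      (((2+2*(2*s))*(1+s^2) - (2*s+2*s^2)*(2*s))/(1+s^2)^2) s := hnum.div hsq onesq_ne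
  have hC : HasDerivAt (fun x : ℝ => 2*Real.log x) (2*(1/s)) s := by
    simpa using (Real.hasDerivAt_log hs.ne').const_mul 2
  have := ((hA.sub hB).add hC).add_const 2
  refine this.congr_deriv ?_
  have h2 : (1+s^2) ≠ (0:ℝ) := onesq_ne
  have hs' : s ≠ 0 := hs.ne'
  unfold ph2
  field_simp
  all_goals first | (try ring_nf) <;> tauto | ring

lemma hd2 {s : ℝ} (hs : 0 < s) : HasDerivAt ph2 (ph3 s) s := by
  have hA : HasDerivAt (fun x : ℝ => -(2*x)/(1+x^2))
      ((-(2)*(1+s^2) - (-(2*s))*(2*s))/(1+s^2)^2) s := by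
    exact ((((hasDerivAt_id s).const_mul 2).neg).div hsq onesq_ne).congr_deriv (by simp)
  have hden2 : HasDerivAt (fun x : ℝ => (1+x^2)^2) (2*(1+s^2)^1*(2*s)) s := hsq.pow 2
  have hnum : HasDerivAt (fun x : ℝ => 2+4*x-2*x^2) (4 - 2*(2*s)) s := by
    exact ((((hasDerivAt_id s).const_mul 4).const_add 2).sub (hpow2.const_mul 2)).congr_deriv (by simp)
  have hB : HasDerivAt (fun x : ℝ => (2+4*x-2*x^2)/(1+x^2)^2)
      (((4-2*(2*s))*(1+s^2)^2 - (2+4*s-2*s^2)*(2*(1+s^2)^1*(2*s)))/((1+s^2)^2)^2) s :=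
    hnum.div hden2 (by positivity)
  have hC : HasDerivAt (fun x : ℝ => 2/x) ((0*s - 2*1)/s^2) s :=
    (hasDerivAt_const s 2).div (hasDerivAt_id s) hs.ne'
  have := (hA.sub hB).add hC
  refine this.congr_deriv ?_
  have h2 : (1+s^2) ≠ (0:ℝ) := onesq_ne
  have hs' : s ≠ 0 := hs.ne'
  unfold ph3
  field_simp
  all_goals first | (try ring_nf) <;> tauto | ring

lemma hd3 {s : ℝ} (hs : 0 < s) : HasDerivAt ph3 (ph4 s) s := by
  have hnumA : HasDerivAt (fun x : ℝ => 2*x^2-2) (2*(2*s)) s := by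
    simpa using (hpow2.const_mul 2).sub_const 2
  have hden2 : HasDerivAt (fun x : ℝ => (1+x^2)^2) (2*(1+s^2)^1*(2*s)) s := hsq.pow 2
  have hden3 : HasDerivAt (fun x : ℝ => (1+x^2)^3) (3*(1+s^2)^2*(2*s)) s := hsq.pow 3
  have hA : HasDerivAt (fun x : ℝ => (2*x^2-2)/(1+x^2)^2)
      ((2*(2*s)*(1+s^2)^2 - (2*s^2-2)*(2*(1+s^2)^1*(2*s)))/((1+s^2)^2)^2) s :=
    hnumA.div hden2 (by positivity)
  have hnumB : HasDerivAt (fun x : ℝ => 4-12*x-12*x^2+4*x^3)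
      (0 - 12 - 12*(2*s) + 4*(3*s^2)) s := by
    have h1 : HasDerivAt (fun x : ℝ => 4-12*x) (0-12) s := by
      exact ((hasDerivAt_const s (4:ℝ)).sub ((hasDerivAt_id s).const_mul 12)).congr_deriv (by simp)
    have h2 := h1.sub (hpow2.const_mul 12)
    have h3 := h2.add (hpow3.const_mul 4)
    exact h3
  have hB : HasDerivAt (fun x : ℝ => (4-12*x-12*x^2+4*x^3)/(1+x^2)^3)
      (((0-12-12*(2*s)+4*(3*s^2))*(1+s^2)^3 - (4-12*s-12*s^2+4*s^3)*(3*(1+s^2)^2*(2*s)))/((1+s^2)^3)^2) s :=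
    hnumB.div hden3 (by positivity)
  have hC : HasDerivAt (fun x : ℝ => 2/x^2) ((0*s^2 - 2*(2*s))/(s^2)^2) s :=
    (hasDerivAt_const s 2).div hpow2 (by positivity)
  have := (hA.sub hB).sub hC
  refine this.congr_deriv ?_
  have h2 : (1+s^2) ≠ (0:ℝ) := onesq_ne
  have hs' : s ≠ 0 := hs.ne'
  unfold ph4
  field_simp
  all_goals first | (try ring_nf) <;> tauto | ring

lemma ph4_nonneg {s : ℝ} (hs : 0 < s) (hs1 : s ≤ 1) : 0 ≤ ph4 s := by
  unfold ph4
  have h1 : (0:ℝ) < (1+s^2)^4 := by positivity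
  have h2 : (0:ℝ) < s^3 := by positivity
  rw [div_add_div _ _ (ne_of_gt h1) (ne_of_gt h2)]
  apply div_nonneg _ (by positivity)
  nlinarith [sq_nonneg s, sq_nonneg (1-s), mul_pos hs hs, sq_nonneg (s*(1-s)),
    pow_pos hs 3, pow_pos hs 4, pow_pos hs 5, mul_nonneg (mul_nonneg hs.le hs.le) (sub_nonneg.2 hs1)]

lemma ph3_one : ph3 1 = 0 := by unfold ph3; norm_num
lemma ph2_one : ph2 1 = 0 := by unfold ph2; norm_num
lemma ph1_one : ph1 1 = 0 := by unfold ph1; norm_num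
lemma ph0_one : ph0 1 = 0 := by unfold ph0; norm_num

lemma ph3_nonpos {s : ℝ} (hs : 0 < s) (hs1 : s ≤ 1) : ph3 s ≤ 0 := by
  have hmono : MonotoneOn ph3 (Icc s 1) := by
    have hsub : ∀ x ∈ Icc s 1, 0 < x := fun x hx => lt_of_lt_of_le hs hx.1
    apply monotoneOn_of_deriv_nonneg (convex_Icc s 1)
    · exact fun x hx => (hd3 (hsub x hx)).continuousAt.continuousWithinAt
    · intro x hx
      rw [interior_Icc] at hx
      exact (hd3 (lt_trans hs hx.1)).differentiableAt.differentiableWithinAt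
    · intro x hx
      rw [interior_Icc] at hx
      rw [(hd3 (lt_trans hs hx.1)).deriv]
      exact ph4_nonneg (lt_trans hs hx.1) hx.2.le
  have := hmono (left_mem_Icc.2 hs1) (right_mem_Icc.2 hs1) hs1
  rwa [ph3_one] at this

lemma ph2_nonneg {s : ℝ} (hs : 0 < s) (hs1 : s ≤ 1) : 0 ≤ ph2 s := by
  have hmono : AntitoneOn ph2 (Icc s 1) := by
    apply antitoneOn_of_deriv_nonpos (convex_Icc s 1)
    · exact fun x hx => (hd2 (lt_of_lt_of_le hs hx.1)).continuousAt.continuousWithinAt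
    · intro x hx
      rw [interior_Icc] at hx
      exact (hd2 (lt_trans hs hx.1)).differentiableAt.differentiableWithinAt
    · intro x hx
      rw [interior_Icc] at hx
      rw [(hd2 (lt_trans hs hx.1)).deriv]
      exact ph3_nonpos (lt_trans hs hx.1) hx.2.le
  have := hmono (left_mem_Icc.2 hs1) (right_mem_Icc.2 hs1) hs1
  rwa [ph2_one] at this

lemma ph1_nonpos {s : ℝ} (hs : 0 < s) (hs1 : s ≤ 1) : ph1 s ≤ 0 := by
  have hmono : MonotoneOn ph1 (Icc s 1) := by
    apply monotoneOn_of_deriv_nonneg (convex_Icc s 1)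
    · exact fun x hx => (hd1 (lt_of_lt_of_le hs hx.1)).continuousAt.continuousWithinAt
    · intro x hx
      rw [interior_Icc] at hx
      exact (hd1 (lt_trans hs hx.1)).differentiableAt.differentiableWithinAt
    · intro x hx
      rw [interior_Icc] at hx
      rw [(hd1 (lt_trans hs hx.1)).deriv]
      exact ph2_nonneg (lt_trans hs hx.1) hx.2.le
  have := hmono (left_mem_Icc.2 hs1) (right_mem_Icc.2 hs1) hs1
  rwa [ph1_one] at this

lemma ph0_nonneg {s : ℝ} (hs : 0 < s) (hs1 : s ≤ 1) : 0 ≤ ph0 s := by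
  have hmono : AntitoneOn ph0 (Icc s 1) := by
    apply antitoneOn_of_deriv_nonpos (convex_Icc s 1)
    · exact fun x hx => (hd0 (lt_of_lt_of_le hs hx.1)).continuousAt.continuousWithinAt
    · intro x hx
      rw [interior_Icc] at hx
      exact (hd0 (lt_trans hs hx.1)).differentiableAt.differentiableWithinAt
    · intro x hx
      rw [interior_Icc] at hx
      rw [(hd0 (lt_trans hs hx.1)).deriv]
      exact ph1_nonpos (lt_trans hs hx.1) hx.2.le
  have := hmono (left_mem_Icc.2 hs1) (right_mem_Icc.2 hs1) hs1
  rwa [ph0_one] at this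



noncomputable def gp (x : ℝ) : ℝ := (1+x)*Real.log 2 + x*Real.log x - (1+x)*Real.log (1+x)

lemma fJS_eq (x : ℝ) : fJS x = gp x / (2*Real.log 2) := by
  have hl2 : Real.log 2 ≠ 0 := (Real.log_pos (by norm_num)).ne'
  unfold fJS gp Real.logb
  field_simp
  try ring

lemma gp_cont : Continuous gp := by
  unfold gp
  apply Continuous.sub
  · apply Continuous.add
    · exact (continuous_const.add continuous_id).mul continuous_const
    · exact Real.continuous_mul_log
  · exact Real.continuous_mul_log.comp (continuous_const.add continuous_id)

lemma gp_one : gp 1 = 0 := by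
  unfold gp; simp [Real.log_one]; ring

lemma gp_pos {x : ℝ} (hx0 : 0 ≤ x) (hx1 : x < 1) : 0 < gp x := by
  have hanti : StrictAntiOn gp (Icc 0 1) := by
    apply strictAntiOn_of_deriv_neg (convex_Icc 0 1) gp_cont.continuousOn
    intro x hx
    rw [interior_Icc] at hx
    obtain ⟨hx0', hx1'⟩ := hx
    have h1x : (0:ℝ) < 1 + x := by linarith
    have hd : HasDerivAt gp (1*Real.log 2 + (Real.log x + 1) - (Real.log (1+x) + 1)*1) x := by
      have hA : HasDerivAt (fun y : ℝ => (1+y)*Real.log 2) (1*Real.log 2) x :=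
        ((hasDerivAt_id x).const_add 1).mul_const (Real.log 2)
      have hB : HasDerivAt (fun y : ℝ => y*Real.log y) (Real.log x + 1) x :=
        Real.hasDerivAt_mul_log hx0'.ne'
      have hC : HasDerivAt (fun y : ℝ => (1+y)*Real.log (1+y)) ((Real.log (1+x) + 1)*1) x :=
        (Real.hasDerivAt_mul_log h1x.ne').comp x ((hasDerivAt_id x).const_add 1)
      exact (hA.add hB).sub hC
    rw [hd.deriv]
    have hlt : Real.log (2*x) < Real.log (1+x) :=
      Real.log_lt_log (by linarith) (by linarith)
    rw [Real.log_mul (by norm_num) hx0'.ne'] at hlt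
    linarith
  have h1m : (1:ℝ) ∈ Icc (0:ℝ) 1 := by norm_num
  have := hanti ⟨hx0, hx1.le⟩ h1m hx1
  rwa [gp_one] at this

noncomputable def Gq (s : ℝ) : ℝ :=
  (1+s^2)*Real.log 2 + 2*(s*(s*Real.log s)) - (1+s^2)*Real.log (1+s^2)

lemma Gq_eq (s : ℝ) : Gq s = gp (s^2) := by
  unfold Gq gp
  rw [Real.log_pow]
  push_cast
  ring

lemma Gq_cont : Continuous Gq := by
  unfold Gq
  apply Continuous.sub
  · apply Continuous.add
    · exact (continuous_const.add (continuous_pow 2)).mul continuous_const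
    · exact continuous_const.mul (continuous_id.mul Real.continuous_mul_log)
  · exact Real.continuous_mul_log.comp (continuous_const.add (continuous_pow 2))

lemma Gq_pos {s : ℝ} (hs0 : 0 ≤ s) (hs1 : s < 1) : 0 < Gq s := by
  rw [Gq_eq]
  exact gp_pos (by positivity) (by nlinarith)

lemma Gq_deriv {s : ℝ} (hs : 0 < s) :
    HasDerivAt Gq (2*s*Real.log 2 + (4*(s*Real.log s) + 2*s) - (2*(s*Real.log (1+s^2)) + 2*s)) s := by
  have h1s2 : (0:ℝ) < 1+s^2 := by positivity
  have hA : HasDerivAt (fun x : ℝ => (1+x^2)*Real.log 2) (2*s*Real.log 2) s :=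
    hsq.mul_const (Real.log 2)
  have hB : HasDerivAt (fun x : ℝ => 2*(x*(x*Real.log x)))
      (2*(1*(s*Real.log s) + s*(Real.log s + 1))) s :=
    ((hasDerivAt_id s).mul (Real.hasDerivAt_mul_log hs.ne')).const_mul 2
  have hC : HasDerivAt (fun x : ℝ => (1+x^2)*Real.log (1+x^2))
      ((Real.log (1+s^2) + 1)*(2*s)) s :=
    by have h := (Real.hasDerivAt_mul_log h1s2.ne').comp s (hsq (s := s)); exact h
  have := (hA.add hB).sub hC
  refine this.congr_deriv ?_
  ring

lemma B_antitone : AntitoneOn (fun s : ℝ => (1-s)^2 / Gq s) (Ico (0:ℝ) 1) := by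
  apply antitoneOn_of_deriv_nonpos (convex_Ico 0 1)
  · apply ContinuousOn.div
    · exact ((continuous_const.sub continuous_id).pow 2).continuousOn
    · exact Gq_cont.continuousOn
    · exact fun x hx => (Gq_pos hx.1 hx.2).ne'
  · intro x hx
    rw [interior_Ico] at hx
    have hnum : HasDerivAt (fun s : ℝ => (1-s)^2) (2*(1-x)*(-1)) x := by
      exact (((hasDerivAt_id x).const_sub 1).pow 2).congr_deriv (by simp)
    exact ((hnum.div (Gq_deriv hx.1) (Gq_pos hx.1.le hx.2).ne')).differentiableAt.differentiableWithinAt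
  · intro x hx
    rw [interior_Ico] at hx
    obtain ⟨hx0, hx1⟩ := hx
    have hG := Gq_pos hx0.le hx1
    have hnum : HasDerivAt (fun s : ℝ => (1-s)^2) (2*(1-x)*(-1)) x := by
      exact (((hasDerivAt_id x).const_sub 1).pow 2).congr_deriv (by simp)
    have hdiv := hnum.div (Gq_deriv hx0) hG.ne'
    rw [show deriv (fun s : ℝ => (1-s)^2 / Gq s) x = _ from hdiv.deriv]
    apply div_nonpos_of_nonpos_of_nonneg _ (by positivity)
    have key : 2*(1-x)*(-1)*Gq x - (1-x)^2*(2*x*Real.log 2 + (4*(x*Real.log x) + 2*x) - (2*(x*Real.log (1+x^2)) + 2*x))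
        = -(2*(1-x)*ph0 x) := by
      unfold Gq ph0
      ring
    rw [key]
    have h0 := ph0_nonneg hx0 hx1.le
    nlinarith


noncomputable def Rf (δ s : ℝ) : ℝ := (1-s^δ)^(1/δ)/(1-s)

lemma A_antitone {δ : ℝ} (hδ0 : 0 < δ) (hδ1 : δ ≤ 1) : AntitoneOn (Rf δ) (Ico (0:ℝ) 1) := by
  unfold Rf
  apply antitoneOn_of_deriv_nonpos (convex_Ico 0 1)
  · apply ContinuousOn.div
    · intro x hx
      have hXnn : (0:ℝ) ≤ 1/δ := by positivity
      exact (((Real.continuousAt_rpow_const _ _ (Or.inr hXnn)).comp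
        (continuousAt_const.sub (Real.continuousAt_rpow_const x δ (Or.inr hδ0.le))))).continuousWithinAt
    · exact (continuous_const.sub continuous_id).continuousOn
    · intro x hx
      have : x < 1 := hx.2
      intro h
      have : (1:ℝ) - x = 0 := h
      linarith
  · intro x hx
    rw [interior_Ico] at hx
    obtain ⟨hx0, hx1⟩ := hx
    have hXpos : (0:ℝ) < 1 - x^δ := by
      have := Real.rpow_lt_one hx0.le hx1 hδ0
      linarith
    have hinner : HasDerivAt (fun s : ℝ => 1-s^δ) (-(δ*x^(δ-1))) x :=
      (Real.hasDerivAt_rpow_const (Or.inl hx0.ne')).const_sub 1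
    have hnum := hinner.rpow_const (p := 1/δ) (Or.inl hXpos.ne')
    have hden : HasDerivAt (fun s : ℝ => 1-s) (-1) x := (hasDerivAt_id x).const_sub 1
    have hne : (1:ℝ) - x ≠ 0 := by intro h; linarith
    exact ((hnum.div hden hne)).differentiableAt.differentiableWithinAt
  · intro x hx
    rw [interior_Ico] at hx
    obtain ⟨hx0, hx1⟩ := hx
    have hXpos : (0:ℝ) < 1 - x^δ := by
      have := Real.rpow_lt_one hx0.le hx1 hδ0
      linarith
    have hinner : HasDerivAt (fun s : ℝ => 1-s^δ) (-(δ*x^(δ-1))) x :=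
      (Real.hasDerivAt_rpow_const (Or.inl hx0.ne')).const_sub 1
    have hnum := hinner.rpow_const (p := 1/δ) (Or.inl hXpos.ne')
    have hden : HasDerivAt (fun s : ℝ => 1-s) (-1) x := (hasDerivAt_id x).const_sub 1
    have hne : (1:ℝ) - x ≠ 0 := by intro h; linarith
    have hdiv := hnum.div hden hne
    rw [show deriv (fun s : ℝ => (1-s^δ)^(1/δ)/(1-s)) x = _ from hdiv.deriv]
    apply div_nonpos_of_nonpos_of_nonneg _ (by positivity)
    -- numerator: N'*(1-x) - N*(-1) ≤ 0
    have hone : (1:ℝ) ≤ x^(δ-1) :=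
      Real.one_le_rpow_of_pos_of_le_one_of_nonpos hx0 hx1.le (by linarith)
    have hxd : x^(δ-1)*x = x^δ := by
      have h := Real.rpow_add hx0 (δ-1) 1
      rw [Real.rpow_one] at h
      rw [show (δ-1)+1 = δ by ring] at h
      exact h.symm
    have hXsplit : (1-x^δ)^(1/δ) = (1-x^δ)^(1/δ-1)*(1-x^δ) := by
      nth_rewrite 1 [show (1/δ) = (1/δ-1)+1 by ring]
      rw [Real.rpow_add hXpos, Real.rpow_one]
    have hXp : (0:ℝ) ≤ (1-x^δ)^(1/δ-1) := Real.rpow_nonneg hXpos.le _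
    have hkey : (1-x^δ) ≤ x^(δ-1)*(1-x) := by
      have : x^(δ-1)*(1-x) = x^(δ-1) - x^δ := by rw [mul_sub, mul_one, hxd]
      rw [this]
      linarith
    have hxdnn : (0:ℝ) ≤ x^(δ-1) := Real.rpow_nonneg hx0.le _
    calc -(δ*x^(δ-1)) * (1/δ) * (1-x^δ)^(1/δ-1) * (1-x) - (1-x^δ)^(1/δ) * (-1)
        = (1-x^δ)^(1/δ) - x^(δ-1) * (1-x^δ)^(1/δ-1) * (1-x) := by
          field_simp
          ring
      _ = (1-x^δ)^(1/δ-1)*(1-x^δ) - (1-x^δ)^(1/δ-1) * (x^(δ-1)*(1-x)) := by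
          rw [hXsplit]; ring
      _ = (1-x^δ)^(1/δ-1) * ((1-x^δ) - x^(δ-1)*(1-x)) := by ring
      _ ≤ 0 := mul_nonpos_of_nonneg_of_nonpos hXp (by linarith)

theorem stmt_7 (α : ℝ) (hα₀ : 0 < α) (hα₁ : α ≤ 1 / 2) :
    ∀ u v : ℝ, 0 ≤ u → u ≤ v → v < 1 →
      (1 - v ^ α) ^ (1 / α) / fJS v ≤ (1 - u ^ α) ^ (1 / α) / fJS u := by
  intro u v hu0 huv hv1
  have hu1 : u < 1 := lt_of_le_of_lt huv hv1
  have hv0 : 0 ≤ v := le_trans hu0 huv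
  set δ := 2*α with hδdef
  have hδ0 : 0 < δ := by positivity
  have hδ1 : δ ≤ 1 := by rw [hδdef]; linarith
  have hl2 : (0:ℝ) < Real.log 2 := Real.log_pos (by norm_num)
  have key : ∀ x : ℝ, 0 ≤ x → x < 1 →
      (1 - x ^ α) ^ (1/α) / fJS x
        = (2*Real.log 2) * ((Rf δ (Real.sqrt x))^2 * ((1 - Real.sqrt x)^2 / Gq (Real.sqrt x))) := by
    intro x hx0 hx1
    set s := Real.sqrt x with hsdef
    have hs0 : 0 ≤ s := Real.sqrt_nonneg x
    have hs1 : s < 1 := by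
      rw [hsdef]
      calc Real.sqrt x < Real.sqrt 1 := Real.sqrt_lt_sqrt hx0 hx1
        _ = 1 := Real.sqrt_one
    have hsx : s^2 = x := Real.sq_sqrt hx0
    have hsd : s ^ δ = x ^ α := by
      rw [hsdef, Real.sqrt_eq_rpow, ← Real.rpow_mul hx0, show (1/2:ℝ)*δ = α by rw [hδdef]; ring]
    have hXpos : (0:ℝ) < 1 - x^α := by
      rcases eq_or_lt_of_le hx0 with h0 | h0
      · rw [← h0, Real.zero_rpow hα₀.ne']; norm_num
      · have := Real.rpow_lt_one hx0 hx1 hα₀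
        linarith
    have hNum : (1 - x^α)^(1/α) = ((1 - s^δ)^(1/δ))^2 := by
      rw [hsd]
      rw [← Real.rpow_natCast ((1-x^α)^((1:ℝ)/δ)) 2]
      rw [← Real.rpow_mul hXpos.le]
      congr 1
      rw [hδdef]
      field_simp
      norm_num
    have hGq : Gq s = gp x := by rw [Gq_eq, hsx]
    have hgp : 0 < gp x := gp_pos hx0 hx1
    have hs1' : (1:ℝ) - s ≠ 0 := by intro h; linarith
    rw [fJS_eq, hNum, hGq]
    unfold Rf
    rw [div_pow]
    have h2 : ((1:ℝ)-s)^2 ≠ 0 := pow_ne_zero _ hs1'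
    have hgp' : gp x ≠ 0 := hgp.ne'
    have hl2' : Real.log 2 ≠ 0 := hl2.ne'
    field_simp
  rw [key u hu0 hu1, key v hv0 hv1]
  set su := Real.sqrt u with hsudef
  set sv := Real.sqrt v with hsvdef
  have hsu0 : 0 ≤ su := Real.sqrt_nonneg u
  have hsv0 : 0 ≤ sv := Real.sqrt_nonneg v
  have hsuv : su ≤ sv := Real.sqrt_le_sqrt huv
  have hsv1 : sv < 1 := by
    rw [hsvdef]
    calc Real.sqrt v < Real.sqrt 1 := Real.sqrt_lt_sqrt hv0 hv1
      _ = 1 := Real.sqrt_one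
  have hsu1 : su < 1 := lt_of_le_of_lt hsuv hsv1
  have hmu : su ∈ Ico (0:ℝ) 1 := ⟨hsu0, hsu1⟩
  have hmv : sv ∈ Ico (0:ℝ) 1 := ⟨hsv0, hsv1⟩
  have hR : Rf δ sv ≤ Rf δ su := A_antitone hδ0 hδ1 hmu hmv hsuv
  have hRnn : 0 ≤ Rf δ sv := by
    unfold Rf
    apply div_nonneg (Real.rpow_nonneg _ _) (by linarith)
    have := Real.rpow_lt_one hsv0 hsv1 hδ0
    linarith
  have hB : (1-sv)^2 / Gq sv ≤ (1-su)^2 / Gq su := B_antitone hmu hmv hsuv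
  have hBnn : 0 ≤ (1-sv)^2 / Gq sv := div_nonneg (sq_nonneg _) (Gq_pos hsv0 hsv1).le
  apply mul_le_mul_of_nonneg_left _ (by positivity)
  exact mul_le_mul (pow_le_pow_left₀ hRnn hR 2) hB hBnn (sq_nonneg _)
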